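/- Let μ₀ be a probability measure on ℝ^d, σ_t ∈ (0,1) differentiable in t with β_t = 1 − σ_t, and φ_t(x) := ∫_{ℝ^d} ρ_{σ_t}(x − β_t y) μ₀(dy). Then φ_t solves the continuity equation ∂_t φ_t(x) = (log σ_t)' div((D_t(x) − x) φ_t(x)), where D_t(x) := ∫ y ρ_{σ_t}(x − β_t y) μ₀(dy) / ∫ ρ_{σ_t}(x − β_t y) μ₀(dy). -/

import Mathlib

open MeasureTheory Real
open scoped RealInnerProductSpace

noncomputable def gauss (d : ℕ) (σ : ℝ) (x : EuclideanSpace ℝ (Fin d)) : ℝ :=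
  (2 * π * σ ^ 2) ^ (-(d : ℝ) / 2) * Real.exp (-‖x‖ ^ 2 / (2 * σ ^ 2))

section helpers
variable {d : ℕ}
local notation "E" => EuclideanSpace ℝ (Fin d)

lemma two_pi_sq_pos {a : ℝ} (ha : a ≠ 0) : 0 < 2 * π * a ^ 2 := by
  have := Real.pi_pos
  positivity

lemma gauss_pos {a : ℝ} (ha : a ≠ 0) (x : E) : 0 < gauss d a x := by
  unfold gauss
  have h := two_pi_sq_pos ha
  positivity

lemma gauss_le {a : ℝ} (ha : a ≠ 0) (x : E) :
    gauss d a x ≤ (2 * π * a ^ 2) ^ (-(d : ℝ) / 2) := by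
  unfold gauss
  have h := two_pi_sq_pos ha
  have h1 : Real.exp (-‖x‖ ^ 2 / (2 * a ^ 2)) ≤ 1 := by
    apply Real.exp_le_one_iff.mpr
    apply div_nonpos_of_nonpos_of_nonneg
    · simp [neg_nonpos]
    · positivity
  nlinarith [Real.rpow_pos_of_pos h (-(d : ℝ) / 2)]

lemma continuous_gauss (a : ℝ) : Continuous (gauss d a) := by
  unfold gauss
  fun_prop

lemma hasDerivAt_z (x y : E) (a : ℝ) :
    HasDerivAt (fun u : ℝ => x - (1 - u) • y) y a := by
  have h : (fun u : ℝ => x - (1 - u) • y) = fun u : ℝ => (x - y) + u • y := by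
    funext u
    rw [sub_smul, one_smul]
    abel
  rw [h]
  simpa using ((hasDerivAt_id a).smul_const y).const_add (x - y)

lemma hasDerivAt_gauss_sigma (x y : E) {a : ℝ} (ha : 0 < a) :
    HasDerivAt (fun u => gauss d u (x - (1 - u) • y))
      (gauss d a (x - (1 - a) • y) *
        (-(d : ℝ) / a + ‖x - (1 - a) • y‖ ^ 2 / a ^ 3 - ⟪x - (1 - a) • y, y⟫ / a ^ 2)) a := by
  have hz := hasDerivAt_z x y a
  set z : E := x - (1 - a) • y with hzdef
  -- norm squared
  have hn : HasDerivAt (fun u : ℝ => ‖x - (1 - u) • y‖ ^ 2) (2 * ⟪z, y⟫) a := by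
    have h1 := HasDerivAt.inner ℝ hz hz
    have h2 : (fun u : ℝ => ‖x - (1 - u) • y‖ ^ 2)
        = fun u : ℝ => ⟪x - (1 - u) • y, x - (1 - u) • y⟫ := by
      funext u; rw [real_inner_self_eq_norm_sq]
    rw [h2]
    refine h1.congr_deriv ?_
    rw [real_inner_comm]; ring
  -- denominator
  have hden : HasDerivAt (fun u : ℝ => 2 * u ^ 2) (2 * (2 * a)) a := by
    simpa using (hasDerivAt_pow 2 a).const_mul 2
  have hden_ne : 2 * a ^ 2 ≠ 0 := by positivity
  -- exponent
  have he : HasDerivAt (fun u : ℝ => -‖x - (1 - u) • y‖ ^ 2 / (2 * u ^ 2))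
      ((-(2 * ⟪z, y⟫) * (2 * a ^ 2) - -‖z‖ ^ 2 * (2 * (2 * a))) / (2 * a ^ 2) ^ 2) a :=
    hn.neg.div hden hden_ne
  have hE := he.exp
  -- prefactor
  have hb : HasDerivAt (fun u : ℝ => 2 * π * u ^ 2) (2 * π * (2 * a)) a := by
    simpa [mul_assoc] using (hasDerivAt_pow 2 a).const_mul (2 * π)
  have hA : HasDerivAt (fun u : ℝ => (2 * π * u ^ 2) ^ (-(d : ℝ) / 2))
      (2 * π * (2 * a) * (-(d : ℝ) / 2) * (2 * π * a ^ 2) ^ (-(d : ℝ) / 2 - 1)) a :=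
    hb.rpow_const (Or.inl (two_pi_sq_pos ha.ne').ne')
  have htot := hA.mul hE
  have hgoalfun : (fun u => gauss d u (x - (1 - u) • y))
      = fun u : ℝ => (2 * π * u ^ 2) ^ (-(d : ℝ) / 2)
          * Real.exp (-‖x - (1 - u) • y‖ ^ 2 / (2 * u ^ 2)) := by
    funext u; rfl
  rw [hgoalfun]
  refine htot.congr_deriv ?_
  rw [Real.rpow_sub_one (two_pi_sq_pos ha.ne').ne']
  unfold gauss
  rw [← hzdef]
  have hπ := Real.pi_pos
  field_simp
  ring


lemma hasFDerivAt_gauss (y : E) (a : ℝ) (w : E) :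
    HasFDerivAt (fun v : E => gauss d a (v - (1 - a) • y))
      ((-gauss d a (w - (1 - a) • y) / a ^ 2) • innerSL ℝ (w - (1 - a) • y)) w := by
  set c : E := (1 - a) • y with hc
  have h1 : HasFDerivAt (fun v : E => v - c) (ContinuousLinearMap.id ℝ _) w :=
    (hasFDerivAt_id w).sub_const c
  have h2 := HasFDerivAt.inner ℝ h1 h1
  have h3 := (h2.const_mul (-(2 * a ^ 2)⁻¹)).exp
  have h4 := h3.const_mul ((2 * π * a ^ 2) ^ (-(d : ℝ) / 2))
  have hfun : (fun v : E => gauss d a (v - c))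
      = fun v : E => (2 * π * a ^ 2) ^ (-(d : ℝ) / 2)
          * Real.exp (-(2 * a ^ 2)⁻¹ * ⟪v - c, v - c⟫) := by
    funext v
    unfold gauss
    rw [real_inner_self_eq_norm_sq]
    ring_nf
  rw [hfun]
  apply h4.congr_fderiv
  ext v
  simp only [ContinuousLinearMap.coe_smul', Pi.smul_apply, innerSL_apply_apply,
    ContinuousLinearMap.coe_comp', Function.comp_apply, ContinuousLinearMap.prod_apply,
    ContinuousLinearMap.coe_id', id_eq, fderivInnerCLM_apply, smul_eq_mul]
  unfold gauss
  rw [real_inner_self_eq_norm_sq, real_inner_comm (v) (w - c)]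
  ring_nf

noncomputable def Lmap (d : ℕ) (a : ℝ) (y w : EuclideanSpace ℝ (Fin d)) :
    EuclideanSpace ℝ (Fin d) →L[ℝ] EuclideanSpace ℝ (Fin d) :=
  ((-gauss d a (w - (1 - a) • y) / a ^ 2) • innerSL ℝ (w - (1 - a) • y)).smulRight (y - w)
    - gauss d a (w - (1 - a) • y) • ContinuousLinearMap.id ℝ _

lemma Lmap_apply (a : ℝ) (y w v : E) :
    Lmap d a y w v = (-gauss d a (w - (1 - a) • y) / a ^ 2 * ⟪w - (1 - a) • y, v⟫) • (y - w)
      - gauss d a (w - (1 - a) • y) • v := by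
  simp only [Lmap, ContinuousLinearMap.sub_apply, ContinuousLinearMap.smulRight_apply,
    ContinuousLinearMap.coe_smul', Pi.smul_apply, innerSL_apply_apply, smul_eq_mul,
    ContinuousLinearMap.coe_id', id_eq]

lemma hasFDerivAt_field (y : E) (a : ℝ) (w : E) :
    HasFDerivAt (fun v : E => gauss d a (v - (1 - a) • y) • (y - v)) (Lmap d a y w) w := by
  have hc := hasFDerivAt_gauss y a w
  have hf : HasFDerivAt (fun v : E => y - v) (-(ContinuousLinearMap.id ℝ E)) w := by
    simpa using (hasFDerivAt_id w).const_sub y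
  apply (hc.smul hf).congr_fderiv
  refine ContinuousLinearMap.ext fun v => ?_
  rw [Lmap_apply]
  simp only [ContinuousLinearMap.add_apply, ContinuousLinearMap.smul_apply,
    ContinuousLinearMap.neg_apply, ContinuousLinearMap.coe_id', id_eq,
    ContinuousLinearMap.smulRight_apply, ContinuousLinearMap.coe_smul', Pi.smul_apply,
    innerSL_apply_apply, smul_eq_mul]
  module

lemma norm_Lmap_le (a : ℝ) (y w : E) :
    ‖Lmap d a y w‖ ≤ gauss d a (w - (1 - a) • y)
      * (‖w - (1 - a) • y‖ * ‖y - w‖ / a ^ 2 + 1) := by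
  set g := gauss d a (w - (1 - a) • y) with hg
  have hg0 : 0 ≤ g := by
    rw [hg]; unfold gauss
    have := Real.pi_pos
    exact mul_nonneg (Real.rpow_nonneg (by positivity) _) (Real.exp_pos _).le
  apply ContinuousLinearMap.opNorm_le_bound
  · positivity
  intro v
  rw [Lmap_apply]
  have h1 : ‖(-g / a ^ 2 * ⟪w - (1 - a) • y, v⟫) • (y - w)‖
      ≤ g / a ^ 2 * ‖w - (1 - a) • y‖ * ‖v‖ * ‖y - w‖ := by
    rw [norm_smul]
    have h2 : |⟪w - (1 - a) • y, v⟫| ≤ ‖w - (1 - a) • y‖ * ‖v‖ := abs_real_inner_le_norm _ _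
    have h3 : ‖(-g / a ^ 2 * ⟪w - (1 - a) • y, v⟫)‖ = g / a ^ 2 * |⟪w - (1 - a) • y, v⟫| := by
      rw [Real.norm_eq_abs, abs_mul]
      congr 1
      rw [abs_div, abs_neg, abs_of_nonneg hg0, abs_of_nonneg (by positivity : (0:ℝ) ≤ a ^ 2)]
    rw [h3]
    have h4 : (0:ℝ) ≤ g / a ^ 2 := by positivity
    nlinarith [norm_nonneg (y - w), norm_nonneg v, abs_nonneg ⟪w - (1 - a) • y, v⟫,
      mul_le_mul_of_nonneg_left h2 h4]
  have h5 : ‖g • v‖ = g * ‖v‖ := by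
    rw [norm_smul, Real.norm_eq_abs, abs_of_nonneg hg0]
  calc ‖_ - _‖ ≤ ‖(-g / a ^ 2 * ⟪w - (1 - a) • y, v⟫) • (y - w)‖ + ‖g • v‖ := norm_sub_le _ _
    _ ≤ g / a ^ 2 * ‖w - (1 - a) • y‖ * ‖v‖ * ‖y - w‖ + g * ‖v‖ := by
        rw [h5]; exact add_le_add h1 le_rfl
    _ ≤ g * (‖w - (1 - a) • y‖ * ‖y - w‖ / a ^ 2 + 1) * ‖v‖ := by
        rcases eq_or_ne a 0 with h | h
        · simp [h]
        · apply le_of_eq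
          have : (0:ℝ) < a ^ 2 := by positivity
          field_simp


lemma trace_Lmap (a : ℝ) (y w : E) :
    ∑ i : Fin d, ⟪Lmap d a y w (EuclideanSpace.single i 1), EuclideanSpace.single i 1⟫
      = gauss d a (w - (1 - a) • y) * (-⟪w - (1 - a) • y, y - w⟫ / a ^ 2 - d) := by
  set g := gauss d a (w - (1 - a) • y) with hgd
  set z : E := w - (1 - a) • y with hzd
  have h : ∀ i : Fin d,
      ⟪Lmap d a y w (EuclideanSpace.single i 1), EuclideanSpace.single i 1⟫
        = (-g / a ^ 2) * (z i * (y - w) i) - g := by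
    intro i
    rw [Lmap_apply]
    rw [inner_sub_left, real_inner_smul_left, real_inner_smul_left]
    have e1 : ⟪z, (EuclideanSpace.single i (1:ℝ))⟫ = z i := by
      rw [EuclideanSpace.inner_single_right]; simp
    have e2 : ⟪y - w, (EuclideanSpace.single i (1:ℝ))⟫ = (y - w) i := by
      rw [EuclideanSpace.inner_single_right]; simp
    have e3 : ⟪(EuclideanSpace.single i (1:ℝ)), (EuclideanSpace.single i (1:ℝ))⟫ = 1 := by
      rw [EuclideanSpace.inner_single_right]; simp
    rw [e1, e2, e3]
    ring
  rw [Finset.sum_congr rfl fun i _ => h i]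
  rw [Finset.sum_sub_distrib, ← Finset.mul_sum, Finset.sum_const, Finset.card_univ,
    Fintype.card_fin, nsmul_eq_mul]
  have hinner : ∑ i : Fin d, z i * (y - w) i = ⟪z, y - w⟫ := by
    rw [PiLp.inner_apply]
    simp [RCLike.inner_apply, conj_trivial]
    exact Finset.sum_congr rfl fun i _ => mul_comm _ _
  rw [hinner]
  ring

lemma continuous_Lmap (a : ℝ) (w : E) : Continuous fun y : E => Lmap d a y w := by
  have hz : Continuous fun y : E => w - (1 - a) • y :=
    continuous_const.sub (continuous_const_smul _)
  have hg : Continuous fun y : E => gauss d a (w - (1 - a) • y) := (continuous_gauss a).comp hz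
  unfold Lmap
  have hin : Continuous fun v : EuclideanSpace ℝ (Fin d) => innerSL ℝ v := (innerSL ℝ).continuous
  have hA : Continuous fun y : E =>
      (-gauss d a (w - (1 - a) • y) / a ^ 2) • innerSL ℝ (w - (1 - a) • y) :=
    ((hg.neg).div_const _).smul (hin.comp hz)
  have hs : Continuous fun p : (EuclideanSpace ℝ (Fin d) →L[ℝ] ℝ) × EuclideanSpace ℝ (Fin d) =>
      p.1.smulRight p.2 := isBoundedBilinearMap_smulRight.continuous
  exact (hs.comp (hA.prodMk (continuous_id.sub continuous_const))).sub
    (hg.smul continuous_const)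

end helpers

/-- `φ_t(x) = ∫ ρ_{σ_t}(x - β_t y) μ₀(dy)` with `β_t = 1 - σ_t`. -/
noncomputable def phi {d : ℕ} (μ₀ : Measure (EuclideanSpace ℝ (Fin d)))
    (σ : ℝ → ℝ) (t : ℝ) (x : EuclideanSpace ℝ (Fin d)) : ℝ :=
  ∫ y, gauss d (σ t) (x - (1 - σ t) • y) ∂μ₀

/-- `D_t(x) = ∫ y ρ_{σ_t}(x - β_t y) μ₀(dy) / ∫ ρ_{σ_t}(x - β_t y) μ₀(dy)`. -/
noncomputable def driftD {d : ℕ} (μ₀ : Measure (EuclideanSpace ℝ (Fin d)))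
    (σ : ℝ → ℝ) (t : ℝ) (x : EuclideanSpace ℝ (Fin d)) : EuclideanSpace ℝ (Fin d) :=
  (∫ y, gauss d (σ t) (x - (1 - σ t) • y) ∂μ₀)⁻¹ •
    ∫ y, gauss d (σ t) (x - (1 - σ t) • y) • y ∂μ₀

set_option maxHeartbeats 2000000 in
/-- The continuity equation `∂_t φ_t = (log σ_t)' div((D_t - x) φ_t)`, where the
divergence of a vector field `F` at `x` is `∑ i ⟪DF(x) eᵢ, eᵢ⟫`. -/
theorem phi_solves_continuity_equation {d : ℕ}
    (μ₀ : Measure (EuclideanSpace ℝ (Fin d))) [IsProbabilityMeasure μ₀]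
    (K : ℝ) (hsupp : μ₀ {x | ‖x‖ ≤ K}ᶜ = 0)
    (T : ℝ) (hT : 0 < T) (σ σ' : ℝ → ℝ)
    (hderiv : ∀ t ∈ Set.Ioo (0:ℝ) T, HasDerivAt σ (σ' t) t)
    (hσmem : ∀ t ∈ Set.Ioo (0:ℝ) T, σ t ∈ Set.Ioo (0:ℝ) 1) :
    ∀ t ∈ Set.Ioo (0:ℝ) T, ∀ x : EuclideanSpace ℝ (Fin d),
      HasDerivAt (fun s => phi μ₀ σ s x)
        ((σ' t / σ t) *
          ∑ i : Fin d,
            ⟪fderiv ℝ (fun y => phi μ₀ σ t y • (driftD μ₀ σ t y - y)) x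
                (EuclideanSpace.single i 1),
              EuclideanSpace.single i 1⟫) t := by
  intro t ht x
  obtain ⟨ht0, htT⟩ := ht
  obtain ⟨ha0, ha1⟩ := hσmem t ⟨ht0, htT⟩
  set a := σ t with ha_def
  have hK0 : 0 ≤ K := by
    by_contra hK
    push_neg at hK
    have he : {x : EuclideanSpace ℝ (Fin d) | ‖x‖ ≤ K} = ∅ := by
      ext z
      simp only [Set.mem_setOf_eq, Set.mem_empty_iff_false, iff_false, not_le]
      exact lt_of_lt_of_le hK (norm_nonneg z)
    rw [he, Set.compl_empty] at hsupp
    simpa [hsupp] using (measure_univ (μ := μ₀))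
  have hKae : ∀ᵐ y ∂μ₀, ‖y‖ ≤ K := by
    rw [ae_iff, ← Set.compl_setOf]
    exact hsupp
  have hζ : ∀ (u : ℝ) (w : EuclideanSpace ℝ (Fin d)),
      Continuous fun y : EuclideanSpace ℝ (Fin d) => gauss d u (w - (1 - u) • y) :=
    fun u w => (continuous_gauss u).comp (continuous_const.sub (continuous_const_smul _))
  have hmeas : ∀ (u : ℝ) (w : EuclideanSpace ℝ (Fin d)),
      AEStronglyMeasurable (fun y => gauss d u (w - (1 - u) • y)) μ₀ :=
    fun u w => (hζ u w).aestronglyMeasurable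
  have hrne : (0:ℝ) ≤ (2 * π * a ^ 2) ^ (-(d : ℝ) / 2) :=
    (Real.rpow_nonneg (two_pi_sq_pos ha0.ne').le _)
  have hgint : ∀ u : ℝ, u ≠ 0 → ∀ w : EuclideanSpace ℝ (Fin d),
      Integrable (fun y => gauss d u (w - (1 - u) • y)) μ₀ := by
    intro u hu w
    apply Integrable.mono' (integrable_const ((2 * π * u ^ 2) ^ (-(d:ℝ)/2))) (hmeas u w)
    filter_upwards with y
    rw [Real.norm_eq_abs, abs_of_pos (gauss_pos hu _)]
    exact gauss_le hu _
  -- PART 1 : the time derivative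
  have hz_cont : Continuous fun y : EuclideanSpace ℝ (Fin d) => x - (1 - a) • y :=
    continuous_const.sub (continuous_const_smul _)
  have hΦ'meas : AEStronglyMeasurable (fun y : EuclideanSpace ℝ (Fin d) =>
      gauss d a (x - (1 - a) • y) *
        (-(d : ℝ) / a + ‖x - (1 - a) • y‖ ^ 2 / a ^ 3 - ⟪x - (1 - a) • y, y⟫ / a ^ 2)) μ₀ := by
    apply Continuous.aestronglyMeasurable
    apply (hζ a x).mul
    apply Continuous.sub
    · exact continuous_const.add ((hz_cont.norm.pow 2).div_const _)
    · exact (hz_cont.inner continuous_id).div_const _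
  set B : ℝ := ‖x‖ + 3 * K with hBdef
  have hB0 : 0 ≤ B := by positivity
  set A1 : ℝ := (2 * π * (a/2) ^ 2) ^ (-(d:ℝ)/2) with hA1def
  have hA1pos : 0 < A1 := Real.rpow_pos_of_pos (two_pi_sq_pos (by positivity)) _
  have hexp_nonpos : -(d:ℝ)/2 ≤ 0 := by
    have : (0:ℝ) ≤ (d:ℝ)/2 := by positivity
    linarith [neg_div (2:ℝ) (d:ℝ)]
  have hkey : ∀ᵐ y ∂μ₀, ∀ u ∈ Metric.ball a (a/2),
      ‖gauss d u (x - (1 - u) • y) *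
        (-(d : ℝ) / u + ‖x - (1 - u) • y‖ ^ 2 / u ^ 3 - ⟪x - (1 - u) • y, y⟫ / u ^ 2)‖
        ≤ A1 * ((d:ℝ)/(a/2) + B ^ 2/(a/2) ^ 3 + B * K/(a/2) ^ 2) := by
    filter_upwards [hKae] with y hy u hu
    rw [Metric.mem_ball, Real.dist_eq, abs_sub_lt_iff] at hu
    have hu0 : a/2 < u := by linarith [hu.2]
    have hu0' : 0 < u := lt_trans (by linarith) hu0
    have hu3 : u < 3 * a / 2 := by linarith [hu.1]
    have habs1 : |1 - u| ≤ 3 := by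
      rw [abs_le]; constructor <;> nlinarith
    have hznorm : ‖x - (1 - u) • y‖ ≤ B := by
      calc ‖x - (1 - u) • y‖ ≤ ‖x‖ + ‖(1 - u) • y‖ := norm_sub_le _ _
        _ = ‖x‖ + |1 - u| * ‖y‖ := by rw [norm_smul, Real.norm_eq_abs]
        _ ≤ ‖x‖ + 3 * K := by nlinarith [norm_nonneg y, abs_nonneg (1 - u)]
    have hgau : gauss d u (x - (1 - u) • y) ≤ A1 := by
      refine le_trans (gauss_le hu0'.ne' _) ?_
      apply Real.rpow_le_rpow_of_nonpos (two_pi_sq_pos (by positivity : (a/2:ℝ) ≠ 0)) ?_ hexp_nonpos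
      have hsq : (a/2) ^ 2 ≤ u ^ 2 := pow_le_pow_left₀ (by positivity) hu0.le 2
      nlinarith [Real.pi_pos]
    have ht1 : |(-(d:ℝ) / u)| ≤ (d:ℝ)/(a/2) := by
      rw [neg_div, abs_neg, abs_of_nonneg (by positivity)]
      gcongr
    have ht2 : |‖x - (1 - u) • y‖ ^ 2 / u ^ 3| ≤ B ^ 2 / (a/2) ^ 3 := by
      rw [abs_of_nonneg (by positivity)]
      gcongr
    have ht3 : |⟪x - (1 - u) • y, y⟫ / u ^ 2| ≤ B * K / (a/2) ^ 2 := by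
      rw [abs_div, abs_of_nonneg (by positivity : (0:ℝ) ≤ u ^ 2)]
      have h1 : |⟪x - (1 - u) • y, y⟫| ≤ B * K := by
        refine le_trans (abs_real_inner_le_norm _ _) ?_
        exact mul_le_mul hznorm hy (norm_nonneg _) hB0
      gcongr
    have hterm : |(-(d : ℝ) / u + ‖x - (1 - u) • y‖ ^ 2 / u ^ 3 - ⟪x - (1 - u) • y, y⟫ / u ^ 2)|
        ≤ (d:ℝ)/(a/2) + B ^ 2/(a/2) ^ 3 + B * K/(a/2) ^ 2 := by
      obtain ⟨l1, r1⟩ := abs_le.mp ht1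
      obtain ⟨l2, r2⟩ := abs_le.mp ht2
      obtain ⟨l3, r3⟩ := abs_le.mp ht3
      rw [abs_le]
      constructor <;> linarith
    rw [Real.norm_eq_abs, abs_mul, abs_of_pos (gauss_pos hu0'.ne' _)]
    exact mul_le_mul hgau hterm (abs_nonneg _) hA1pos.le
  have hdiffae : ∀ᵐ y ∂μ₀, ∀ u ∈ Metric.ball a (a/2),
      HasDerivAt (fun v => gauss d v (x - (1 - v) • y))
        (gauss d u (x - (1 - u) • y) *
          (-(d : ℝ) / u + ‖x - (1 - u) • y‖ ^ 2 / u ^ 3 - ⟪x - (1 - u) • y, y⟫ / u ^ 2)) u := by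
    filter_upwards with y u hu
    rw [Metric.mem_ball, Real.dist_eq, abs_sub_lt_iff] at hu
    exact hasDerivAt_gauss_sigma x y (by linarith [hu.2] : (0:ℝ) < u)
  have main1 := hasDerivAt_integral_of_dominated_loc_of_deriv_le (μ := μ₀)
    (F := fun u (y : EuclideanSpace ℝ (Fin d)) => gauss d u (x - (1 - u) • y))
    (F' := fun u (y : EuclideanSpace ℝ (Fin d)) => gauss d u (x - (1 - u) • y) *
      (-(d : ℝ) / u + ‖x - (1 - u) • y‖ ^ 2 / u ^ 3 - ⟪x - (1 - u) • y, y⟫ / u ^ 2))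
    (Metric.ball_mem_nhds a (half_pos ha0)) (Filter.Eventually.of_forall fun u => hmeas u x) (hgint a ha0.ne' x)
    hΦ'meas hkey (integrable_const _) hdiffae
  have hchain : HasDerivAt (fun s => phi μ₀ σ s x)
      ((∫ y, gauss d a (x - (1 - a) • y) *
        (-(d : ℝ) / a + ‖x - (1 - a) • y‖ ^ 2 / a ^ 3 - ⟪x - (1 - a) • y, y⟫ / a ^ 2) ∂μ₀)
        * σ' t) t :=
    main1.2.comp t (hderiv t ⟨ht0, htT⟩)
  -- PART 2 : the space divergence
  have hphi_pos : ∀ w : EuclideanSpace ℝ (Fin d),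
      0 < ∫ y, gauss d a (w - (1 - a) • y) ∂μ₀ := by
    intro w
    set c₀ := (2 * π * a ^ 2) ^ (-(d:ℝ)/2) * Real.exp (-(‖w‖ + K) ^ 2 / (2 * a ^ 2)) with hc₀
    have hc₀pos : 0 < c₀ := by
      have := two_pi_sq_pos ha0.ne'
      positivity
    have hlow : ∀ᵐ y ∂μ₀, c₀ ≤ gauss d a (w - (1 - a) • y) := by
      filter_upwards [hKae] with y hy
      unfold gauss
      apply mul_le_mul_of_nonneg_left _ hrne
      apply Real.exp_le_exp.mpr
      have hz : ‖w - (1 - a) • y‖ ≤ ‖w‖ + K := by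
        calc ‖w - (1 - a) • y‖ ≤ ‖w‖ + ‖(1 - a) • y‖ := norm_sub_le _ _
          _ = ‖w‖ + |1 - a| * ‖y‖ := by rw [norm_smul, Real.norm_eq_abs]
          _ ≤ ‖w‖ + K := by
              rw [abs_of_nonneg (by linarith : (0:ℝ) ≤ 1 - a)]
              nlinarith [norm_nonneg y]
      have h2 : (0:ℝ) < 2 * a ^ 2 := by positivity
      apply (div_le_div_iff_of_pos_right h2).mpr
      nlinarith [norm_nonneg (w - (1 - a) • y), norm_nonneg w]
    calc (0:ℝ) < c₀ := hc₀pos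
      _ = ∫ _, c₀ ∂μ₀ := by rw [integral_const, probReal_univ, one_smul]
      _ ≤ ∫ y, gauss d a (w - (1 - a) • y) ∂μ₀ :=
          integral_mono_ae (integrable_const _) (hgint a ha0.ne' w) hlow
  have hgyint : ∀ w : EuclideanSpace ℝ (Fin d),
      Integrable (fun y => gauss d a (w - (1 - a) • y) • y) μ₀ := by
    intro w
    apply Integrable.mono' (integrable_const ((2 * π * a ^ 2) ^ (-(d:ℝ)/2) * K))
      (((hζ a w).smul continuous_id).aestronglyMeasurable)
    filter_upwards [hKae] with y hy
    show ‖gauss d a (w - (1 - a) • y) • y‖ ≤ _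
    rw [norm_smul, Real.norm_eq_abs, abs_of_pos (gauss_pos ha0.ne' _)]
    exact mul_le_mul (gauss_le ha0.ne' _) hy (norm_nonneg _) hrne
  have hvf : (fun w => phi μ₀ σ t w • (driftD μ₀ σ t w - w))
      = fun w => ∫ y, gauss d a (w - (1 - a) • y) • (y - w) ∂μ₀ := by
    funext w
    have hne := (hphi_pos w).ne'
    unfold phi driftD
    rw [smul_sub, smul_smul, mul_inv_cancel₀ hne, one_smul, ← integral_smul_const,
      ← integral_sub (hgyint w) ((hgint a ha0.ne' w).smul_const w)]
    simp only [smul_sub]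
  set C₂ : ℝ := (2 * π * a ^ 2) ^ (-(d:ℝ)/2) * ((‖x‖ + 1 + K) * (K + (‖x‖ + 1)) / a ^ 2 + 1)
    with hC₂def
  have hFbound : ∀ᵐ y ∂μ₀, ∀ w ∈ Metric.ball x 1, ‖Lmap d a y w‖ ≤ C₂ := by
    filter_upwards [hKae] with y hy w hw
    rw [Metric.mem_ball, dist_eq_norm] at hw
    have hwn : ‖w‖ ≤ ‖x‖ + 1 := by
      have := norm_sub_norm_le w x
      linarith
    refine le_trans (norm_Lmap_le a y w) ?_
    have hzb : ‖w - (1 - a) • y‖ ≤ ‖x‖ + 1 + K := by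
      calc ‖w - (1 - a) • y‖ ≤ ‖w‖ + ‖(1 - a) • y‖ := norm_sub_le _ _
        _ = ‖w‖ + |1 - a| * ‖y‖ := by rw [norm_smul, Real.norm_eq_abs]
        _ ≤ ‖x‖ + 1 + K := by
            rw [abs_of_nonneg (by linarith : (0:ℝ) ≤ 1 - a)]
            nlinarith [norm_nonneg y]
    have hyw : ‖y - w‖ ≤ K + (‖x‖ + 1) := by
      calc ‖y - w‖ ≤ ‖y‖ + ‖w‖ := norm_sub_le _ _
        _ ≤ K + (‖x‖ + 1) := add_le_add hy hwn
    rw [hC₂def]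
    apply mul_le_mul (gauss_le ha0.ne' _) ?_ (by positivity) hrne
    apply add_le_add ?_ le_rfl
    apply (div_le_div_iff_of_pos_right (by positivity : (0:ℝ) < a ^ 2)).mpr
    exact mul_le_mul hzb hyw (norm_nonneg _) (by positivity)
  have hFint : Integrable (fun y => gauss d a (x - (1 - a) • y) • (y - x)) μ₀ := by
    have h := (hgyint x).sub ((hgint a ha0.ne' x).smul_const x)
    apply h.congr
    filter_upwards with y
    simp only [Pi.sub_apply, smul_sub]
  have hmain2 : HasFDerivAt (fun w => ∫ y, gauss d a (w - (1 - a) • y) • (y - w) ∂μ₀)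
      (∫ y, Lmap d a y x ∂μ₀) x := by
    apply hasFDerivAt_integral_of_dominated_of_fderiv_le (bound := fun _ => C₂)
      (F' := fun w (y : EuclideanSpace ℝ (Fin d)) => Lmap d a y w) (Metric.ball_mem_nhds x one_pos)
    · exact Filter.Eventually.of_forall fun w =>
        ((hζ a w).smul (continuous_id.sub continuous_const)).aestronglyMeasurable
    · exact hFint
    · exact (continuous_Lmap a x).aestronglyMeasurable
    · exact hFbound
    · exact integrable_const _
    · exact Filter.Eventually.of_forall fun y w _ => hasFDerivAt_field y a w
  have hfderiv : fderiv ℝ (fun w => phi μ₀ σ t w • (driftD μ₀ σ t w - w)) x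
      = ∫ y, Lmap d a y x ∂μ₀ := by
    rw [hvf]
    exact hmain2.fderiv
  have hLint : Integrable (fun y => Lmap d a y x) μ₀ := by
    apply Integrable.mono' (integrable_const C₂) (continuous_Lmap a x).aestronglyMeasurable
    filter_upwards [hFbound] with y h
    exact h x (Metric.mem_ball_self one_pos)
  have htr : ∀ i : Fin d,
      ⟪(∫ y, Lmap d a y x ∂μ₀) (EuclideanSpace.single i 1), EuclideanSpace.single i 1⟫
        = ∫ y, ⟪Lmap d a y x (EuclideanSpace.single i 1), EuclideanSpace.single i 1⟫ ∂μ₀ := by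
    intro i
    rw [ContinuousLinearMap.integral_apply hLint, real_inner_comm]
    have h2 := (innerSL ℝ (EuclideanSpace.single i (1:ℝ))).integral_comp_comm
      (hLint.apply_continuousLinearMap (EuclideanSpace.single i 1))
    simp only [innerSL_apply_apply] at h2
    rw [← h2]
    congr 1
    funext y
    exact real_inner_comm _ _
  have hintegr_tr : ∀ i : Fin d, Integrable (fun y =>
      ⟪Lmap d a y x (EuclideanSpace.single i 1), EuclideanSpace.single i 1⟫) μ₀ := by
    intro i
    have h1 := (innerSL ℝ (EuclideanSpace.single i (1:ℝ))).integrable_comp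
      (hLint.apply_continuousLinearMap (EuclideanSpace.single i 1))
    refine h1.congr (Filter.Eventually.of_forall fun y => ?_)
    simp only [innerSL_apply_apply]
    exact real_inner_comm _ _
  have hsum : ∑ i : Fin d,
      ⟪(∫ y, Lmap d a y x ∂μ₀) (EuclideanSpace.single i 1), EuclideanSpace.single i 1⟫
        = ∫ y, gauss d a (x - (1 - a) • y) * (-⟪x - (1 - a) • y, y - x⟫ / a ^ 2 - d) ∂μ₀ := by
    rw [Finset.sum_congr rfl fun i _ => htr i,
      ← integral_finset_sum _ fun i _ => hintegr_tr i]
    congr 1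
    funext y
    exact trace_Lmap a y x
  have hfinal : (σ' t / a) * ∑ i : Fin d,
      ⟪fderiv ℝ (fun y => phi μ₀ σ t y • (driftD μ₀ σ t y - y)) x
        (EuclideanSpace.single i 1), EuclideanSpace.single i 1⟫
      = (∫ y, gauss d a (x - (1 - a) • y) *
          (-(d : ℝ) / a + ‖x - (1 - a) • y‖ ^ 2 / a ^ 3 - ⟪x - (1 - a) • y, y⟫ / a ^ 2) ∂μ₀)
        * σ' t := by
    rw [hfderiv, hsum]
    have hTeq : (fun y : EuclideanSpace ℝ (Fin d) =>
        gauss d a (x - (1 - a) • y) * (-⟪x - (1 - a) • y, y - x⟫ / a ^ 2 - d))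
        = fun y => a * (gauss d a (x - (1 - a) • y) *
          (-(d : ℝ) / a + ‖x - (1 - a) • y‖ ^ 2 / a ^ 3 - ⟪x - (1 - a) • y, y⟫ / a ^ 2)) := by
      funext y
      have hzx : ⟪x - (1 - a) • y, x⟫
          = ‖x - (1 - a) • y‖ ^ 2 + (1 - a) * ⟪x - (1 - a) • y, y⟫ := by
        rw [← real_inner_self_eq_norm_sq, ← real_inner_smul_right, ← inner_add_right,
          sub_add_cancel]
      rw [inner_sub_right, hzx]
      field_simp
      ring
    rw [hTeq, integral_const_mul]
    field_simp
  rw [hfinal]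
  exact hchain
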